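/- Weak tail-robustness: Let π be a strictly positive integrable function on (0,∞), α, β > 0, and for y ∈ ℕ let λ̃(y) = ∫₀^∞ (u/(β+u))(α+y) W(u;y)π(u) du / ∫₀^∞ W(u;y)π(u) du with W(u;y) = u^y (1+u/β)^{-(y+α)}. Then lim_{y→∞} |λ̃(y) - y|/y = 0. -/

import Mathlib

open Real Set Filter MeasureTheory

lemma my_setIntegral_pos {f : ℝ → ℝ} {s : Set ℝ} (hs : MeasurableSet s)
    (hμ : 0 < volume s) (hf : IntegrableOn f s) (h2 : ∀ u ∈ s, 0 < f u) :
    0 < ∫ u in s, f u := by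
  have hae : 0 ≤ᵐ[volume.restrict s] f := by
    rw [Filter.EventuallyLE, ae_restrict_iff' hs]
    exact Filter.Eventually.of_forall fun u hu => (h2 u hu).le
  rw [setIntegral_pos_iff_support_of_nonneg_ae hae hf]
  have : s ⊆ Function.support f ∩ s := fun u hu => ⟨(h2 u hu).ne', hu⟩
  exact lt_of_lt_of_le hμ (measure_mono this)

lemma ratio_tendsto {β : ℝ} (hβ : 0 < β) {g h : ℝ → ℝ}
    (hgm : Measurable g)
    (hg0 : ∀ u ∈ Ioi (0:ℝ), 0 ≤ g u)
    (hgβ : ∀ u ∈ Ioi (0:ℝ), g u ≤ β)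
    (hh : IntegrableOn h (Ioi 0))
    (hh0 : ∀ u ∈ Ioi (0:ℝ), 0 ≤ h u)
    (hJint : ∀ y : ℕ, IntegrableOn (fun u => g u ^ y * h u) (Ioi 0))
    (hJpos : ∀ y : ℕ, 0 < ∫ u in Ioi (0:ℝ), g u ^ y * h u)
    (hgc : ∀ c, c < β → ∃ s : Set ℝ, MeasurableSet s ∧ s ⊆ Ioi 0 ∧
        (∀ u ∈ s, c ≤ g u) ∧ 0 < ∫ u in s, h u) :
    Tendsto (fun y : ℕ =>
        (∫ u in Ioi (0:ℝ), g u ^ (y+1) * h u) / (∫ u in Ioi (0:ℝ), g u ^ y * h u))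
      atTop (nhds β) := by
  set J : ℕ → ℝ := fun y => ∫ u in Ioi (0:ℝ), g u ^ y * h u with hJ
  have hh_ae : 0 ≤ᵐ[volume.restrict (Ioi (0:ℝ))] h := by
    rw [Filter.EventuallyLE, ae_restrict_iff' measurableSet_Ioi]
    exact Filter.Eventually.of_forall fun u hu => hh0 u hu
  set H : ℝ := ∫ u in Ioi (0:ℝ), h u with hH
  have hH0 : 0 ≤ H := setIntegral_nonneg measurableSet_Ioi hh0
  -- upper bound : J (y+1) ≤ β * J y
  have hub : ∀ y : ℕ, J (y+1) ≤ β * J y := by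
    intro y
    have : (∫ u in Ioi (0:ℝ), g u ^ (y+1) * h u) ≤ ∫ u in Ioi (0:ℝ), β * (g u ^ y * h u) := by
      apply setIntegral_mono_on (hJint (y+1)) ((hJint y).const_mul β) measurableSet_Ioi
      intro u hu
      have h1 : g u ^ (y+1) = g u * g u ^ y := by ring
      rw [h1]
      nlinarith [mul_nonneg (sub_nonneg.mpr (hgβ u hu))
        (mul_nonneg (pow_nonneg (hg0 u hu) y) (hh0 u hu))]
    calc J (y+1) ≤ ∫ u in Ioi (0:ℝ), β * (g u ^ y * h u) := this
      _ = β * J y := integral_const_mul β _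
  rw [tendsto_order]
  constructor
  · -- lower: ∀ c < β, eventually c < r y
    intro c hc
    rcases le_or_gt c 0 with hc0 | hc0
    · refine Filter.Eventually.of_forall fun y => ?_
      have := hJpos y; have := hJpos (y+1)
      have : 0 < J (y+1) / J y := by positivity
      linarith
    · -- 0 < c < β
      set c' : ℝ := (2*c + β)/3 with hc'
      set c'' : ℝ := (c + 2*β)/3 with hc''
      have hcc' : c < c' := by rw [hc']; linarith
      have hc'c'' : c' < c'' := by rw [hc', hc'']; linarith
      have hc''β : c'' < β := by rw [hc'']; linarith
      have hc'0 : 0 < c' := by rw [hc']; linarith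
      have hc''0 : 0 < c'' := by rw [hc'']; linarith
      clear hc' hc''
      clear_value c' c''
      obtain ⟨s, hs_meas, hs_sub, hs_ge, hm⟩ := hgc c'' hc''β
      set m : ℝ := ∫ u in s, h u with hmdef
      -- J y ≥ c''^y * m
      have hJlb : ∀ y : ℕ, c'' ^ y * m ≤ J y := by
        intro y
        have h1 : (∫ u in s, c'' ^ y * h u) ≤ ∫ u in s, g u ^ y * h u := by
          apply setIntegral_mono_on ((hh.mono_set hs_sub).const_mul _)
            ((hJint y).mono_set hs_sub) (hs_meas)
          intro u hu
          have := hh0 u (hs_sub hu)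
          have hg := hs_ge u hu
          have : c'' ^ y ≤ g u ^ y := pow_le_pow_left₀ hc''0.le hg y
          nlinarith [hh0 u (hs_sub hu)]
        have h2 : (∫ u in s, g u ^ y * h u) ≤ J y := by
          apply setIntegral_mono_set (hJint y)
          · rw [Filter.EventuallyLE, ae_restrict_iff' measurableSet_Ioi]
            refine Filter.Eventually.of_forall fun u hu => ?_
            exact mul_nonneg (pow_nonneg (hg0 u hu) y) (hh0 u hu)
          · exact Filter.Eventually.of_forall hs_sub
        calc c'' ^ y * m = ∫ u in s, c'' ^ y * h u := (integral_const_mul _ _).symm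
          _ ≤ ∫ u in s, g u ^ y * h u := h1
          _ ≤ J y := h2
      have hm' : 0 < m := hm
      -- key : c' * J y - c'^(y+1) * H ≤ J (y+1)
      have hkey : ∀ y : ℕ, c' * J y - c' ^ (y+1) * H ≤ J (y+1) := by
        intro y
        have hint2 : IntegrableOn (fun u => c' * (g u ^ y * h u) - c' ^ (y+1) * h u)
            (Ioi (0:ℝ)) := ((hJint y).const_mul c').sub (hh.const_mul _)
        have h1 : (∫ u in Ioi (0:ℝ), (c' * (g u ^ y * h u) - c' ^ (y+1) * h u))
            ≤ ∫ u in Ioi (0:ℝ), g u ^ (y+1) * h u := by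
          apply setIntegral_mono_on hint2 (hJint (y+1)) measurableSet_Ioi
          intro u hu
          have hgu0 := hg0 u hu
          have hhu0 := hh0 u hu
          rcases le_or_gt c' (g u) with hle | hlt
          · have h3 : g u ^ (y+1) = g u * g u ^ y := by ring
            have h10 : c' * (g u ^ y * h u) ≤ g u ^ (y+1) * h u := by
              rw [h3]
              nlinarith [mul_nonneg (sub_nonneg.mpr hle)
                (mul_nonneg (pow_nonneg hgu0 y) hhu0)]
            nlinarith [mul_nonneg (pow_nonneg hc'0.le (y+1)) hhu0]
          · have h4 : g u ^ y ≤ c' ^ y := pow_le_pow_left₀ hgu0 hlt.le y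
            have h5 : c' * (g u ^ y * h u) - c' ^ (y+1) * h u ≤ 0 := by
              have h11 : c' ^ (y+1) = c' * c' ^ y := by ring
              nlinarith [mul_nonneg (sub_nonneg.mpr h4) hhu0]
            nlinarith [mul_nonneg (pow_nonneg hgu0 (y+1)) hhu0]
        have h2 : (∫ u in Ioi (0:ℝ), (c' * (g u ^ y * h u) - c' ^ (y+1) * h u))
            = c' * J y - c' ^ (y+1) * H := by
          rw [integral_sub ((hJint y).const_mul c') (hh.const_mul _),
            integral_const_mul, integral_const_mul]
        linarith [h1, h2.symm.le]
      -- error term e y → 0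
      have hratio : (0:ℝ) ≤ c'/c'' ∧ c'/c'' < 1 := by
        constructor
        · positivity
        · rw [div_lt_one hc''0]; exact hc'c''
      have he : Tendsto (fun y : ℕ => c' * ((c'/c'')^y * (H/m))) atTop (nhds 0) := by
        have h0 : Tendsto (fun y : ℕ => (c'/c'')^y) atTop (nhds 0) :=
          tendsto_pow_atTop_nhds_zero_of_lt_one hratio.1 hratio.2
        have := (h0.mul_const (H/m)).const_mul c'
        simpa using this
      have hev : ∀ᶠ y : ℕ in atTop, c' * ((c'/c'')^y * (H/m)) < c' - c := by
        have := he.eventually (eventually_lt_nhds (show (0:ℝ) < c' - c by linarith))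
        exact this
      filter_upwards [hev] with y hy
      -- r y ≥ c' - c'^(y+1)*H / J y ≥ c' - e y > c
      have hJy := hJpos y
      have h6 : c' - c' ^ (y+1) * H / J y ≤ J (y+1) / J y := by
        rw [le_div_iff₀ hJy]
        have := hkey y
        have h7 : (c' - c' ^ (y+1) * H / J y) * J y = c' * J y - c' ^ (y+1) * H := by
          have hJy' : J y ≠ 0 := hJy.ne'
          field_simp
        linarith [h7.le, h7.ge]
      have h8 : c' ^ (y+1) * H / J y ≤ c' * ((c'/c'')^y * (H/m)) := by
        have hnum : 0 ≤ c' ^ (y+1) * H := mul_nonneg (pow_nonneg hc'0.le _) hH0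
        have hden : 0 < c'' ^ y * m := mul_pos (pow_pos hc''0 y) hm'
        have h9 : c' ^ (y+1) * H / J y ≤ c' ^ (y+1) * H / (c'' ^ y * m) :=
          div_le_div_of_nonneg_left hnum hden (hJlb y)
        have h10 : c' ^ (y+1) * H / (c'' ^ y * m) = c' * ((c'/c'')^y * (H/m)) := by
          rw [div_pow, pow_succ]
          field_simp
        linarith [h9, h10.le]
      linarith
  · intro c hc
    refine Filter.Eventually.of_forall fun y => ?_
    have hJy := hJpos y
    have : J (y+1) / J y ≤ β := by
      rw [div_le_iff₀ hJy]; exact hub y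
    linarith

open Real Set Filter MeasureTheory

theorem weak_tail_robustness
    (α β : ℝ) (hα : 0 < α) (hβ : 0 < β)
    (pdf : ℝ → ℝ)
    (hpos : ∀ u ∈ Set.Ioi (0:ℝ), 0 < pdf u)
    (hint : IntegrableOn pdf (Set.Ioi 0))
    (lt : ℕ → ℝ)
    (hlt : ∀ y : ℕ, lt y =
      (∫ u in Set.Ioi (0:ℝ),
          (u / (β + u)) * (α + y) * (u ^ y * (1 + u / β) ^ (-((y:ℝ) + α)) * pdf u)) /
      (∫ u in Set.Ioi (0:ℝ), u ^ y * (1 + u / β) ^ (-((y:ℝ) + α)) * pdf u)) :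
    Filter.Tendsto (fun y : ℕ => |lt y - y| / y) Filter.atTop (nhds 0) := by
  have hβ' : β ≠ 0 := hβ.ne'
  set g : ℝ → ℝ := fun u => u / (1 + u / β) with hg
  set h : ℝ → ℝ := fun u => (1 + u / β) ^ (-α) * pdf u with hhdef
  have hb : ∀ u ∈ Ioi (0:ℝ), 0 < 1 + u / β := by
    intro u hu
    have : 0 < u / β := div_pos hu hβ
    linarith
  have hgm : Measurable g := by fun_prop
  have hgpos : ∀ u ∈ Ioi (0:ℝ), 0 < g u := fun u hu => div_pos hu (hb u hu)
  have hg0 : ∀ u ∈ Ioi (0:ℝ), 0 ≤ g u := fun u hu => (hgpos u hu).le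
  have hgβ : ∀ u ∈ Ioi (0:ℝ), g u ≤ β := by
    intro u hu
    rw [hg]
    rw [div_le_iff₀ (hb u hu)]
    have h1 : β * (1 + u / β) = β + u := by field_simp
    rw [h1]
    linarith [le_of_lt (mem_Ioi.mp hu)]
  have hhpos : ∀ u ∈ Ioi (0:ℝ), 0 < h u := by
    intro u hu
    exact mul_pos (rpow_pos_of_pos (hb u hu) _) (hpos u hu)
  have hh0 : ∀ u ∈ Ioi (0:ℝ), 0 ≤ h u := fun u hu => (hhpos u hu).le
  have hhmeas : AEStronglyMeasurable h (volume.restrict (Ioi (0:ℝ))) := by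
    apply AEStronglyMeasurable.mul _ hint.1
    exact (Measurable.aestronglyMeasurable (by fun_prop))
  have hhint : IntegrableOn h (Ioi (0:ℝ)) := by
    apply Integrable.mono' hint hhmeas
    rw [ae_restrict_iff' measurableSet_Ioi]
    refine Filter.Eventually.of_forall fun u hu => ?_
    have hp := hpos u hu
    have hr1 : (1 + u / β) ^ (-α) ≤ 1 := by
      apply rpow_le_one_of_one_le_of_nonpos
      · have : 0 < u / β := div_pos hu hβ
        linarith
      · linarith
    have hr0 : (0:ℝ) < (1 + u / β) ^ (-α) := rpow_pos_of_pos (hb u hu) _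
    rw [hhdef, Real.norm_eq_abs, abs_of_pos (mul_pos hr0 hp)]
    nlinarith
  have hJint : ∀ y : ℕ, IntegrableOn (fun u => g u ^ y * h u) (Ioi (0:ℝ)) := by
    intro y
    apply Integrable.mono' (hhint.const_mul (β ^ y))
    · exact ((hgm.pow_const y).aestronglyMeasurable.mul hhmeas)
    · rw [ae_restrict_iff' measurableSet_Ioi]
      refine Filter.Eventually.of_forall fun u hu => ?_
      have h1 : g u ^ y ≤ β ^ y := pow_le_pow_left₀ (hg0 u hu) (hgβ u hu) y
      have h2 := hh0 u hu
      rw [Real.norm_eq_abs, abs_of_nonneg (mul_nonneg (pow_nonneg (hg0 u hu) y) h2)]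
      nlinarith [pow_nonneg (hg0 u hu) y]
  have hvol : (0:ENNReal) < volume (Ioi (0:ℝ)) := by
    rw [Real.volume_Ioi]; exact ENNReal.zero_lt_top
  have hJpos : ∀ y : ℕ, 0 < ∫ u in Ioi (0:ℝ), g u ^ y * h u := by
    intro y
    apply my_setIntegral_pos measurableSet_Ioi hvol (hJint y)
    intro u hu
    exact mul_pos (pow_pos (hgpos u hu) y) (hhpos u hu)
  have hgc : ∀ c, c < β → ∃ s : Set ℝ, MeasurableSet s ∧ s ⊆ Ioi 0 ∧
      (∀ u ∈ s, c ≤ g u) ∧ 0 < ∫ u in s, h u := by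
    intro c hc
    set c₀ : ℝ := max c 0 with hc₀
    have hc₀β : c₀ < β := max_lt hc hβ
    have hc₀0 : 0 ≤ c₀ := le_max_right _ _
    set u0 : ℝ := c₀ * β / (β - c₀) with hu0def
    have hu00 : 0 ≤ u0 := div_nonneg (mul_nonneg hc₀0 hβ.le) (by linarith)
    have hsub : Ioc u0 (u0+1) ⊆ Ioi (0:ℝ) := fun u hu => lt_of_le_of_lt hu00 hu.1
    refine ⟨Ioc u0 (u0+1), measurableSet_Ioc, hsub, ?_, ?_⟩
    · intro u hu
      have hmem : u ∈ Ioi (0:ℝ) := hsub hu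
      have hu0 : (0:ℝ) < u := hmem
      have h1 : c₀ * β < u * (β - c₀) :=
        (div_lt_iff₀ (by linarith : (0:ℝ) < β - c₀)).mp hu.1
      have h2 : c₀ ≤ g u := by
        rw [hg, le_div_iff₀ (hb u hmem)]
        have h3 : c₀ * (1 + u / β) * β = c₀ * β + c₀ * u := by field_simp
        rw [← mul_le_mul_iff_of_pos_right hβ, h3]
        nlinarith
      exact le_trans (le_max_left c 0) h2
    · apply my_setIntegral_pos measurableSet_Ioc _ (hhint.mono_set hsub)
        (fun u hu => hhpos u (hsub hu))
      rw [Real.volume_Ioc]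
      simp
  have hr := ratio_tendsto hβ hgm hg0 hgβ hhint hh0 hJint hJpos hgc
  -- rewrite lt y
  have hkey : ∀ y : ℕ, ∀ u ∈ Ioi (0:ℝ),
      u ^ y * (1 + u / β) ^ (-((y:ℝ) + α)) * pdf u = g u ^ y * h u := by
    intro y u hu
    have hbu := hb u hu
    have e1 : (1 + u / β) ^ (-((y:ℝ) + α))
        = ((1 + u / β) ^ y)⁻¹ * (1 + u / β) ^ (-α) := by
      rw [neg_add, rpow_add hbu, rpow_neg hbu.le, rpow_natCast]
    rw [e1, hg, hhdef, div_pow]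
    have : (1 + u / β) ^ y ≠ 0 := pow_ne_zero _ hbu.ne'
    field_simp
  have he2 : ∀ u ∈ Ioi (0:ℝ), u / (β + u) = g u / β := by
    intro u hu
    rw [hg, div_div]
    congr 1
    field_simp
  have hlt2 : ∀ y : ℕ, lt y = ((α + y) / β * (∫ u in Ioi (0:ℝ), g u ^ (y+1) * h u)) /
      (∫ u in Ioi (0:ℝ), g u ^ y * h u) := by
    intro y
    rw [hlt y]
    congr 1
    · rw [setIntegral_congr_fun measurableSet_Ioi
        (show EqOn (fun u => (u / (β + u)) * (α + y) *
            (u ^ y * (1 + u / β) ^ (-((y:ℝ) + α)) * pdf u))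
          (fun u => (α + y) / β * (g u ^ (y+1) * h u)) (Ioi 0) from ?_)]
      · exact integral_const_mul _ _
      · intro u hu
        simp only
        rw [hkey y u hu, he2 u hu, pow_succ]
        ring
    · exact setIntegral_congr_fun measurableSet_Ioi fun u hu => hkey y u hu
  -- final limit computation
  set J : ℕ → ℝ := fun y => ∫ u in Ioi (0:ℝ), g u ^ y * h u with hJdef
  have t1 : Tendsto (fun y : ℕ => (α + (y:ℝ)) / (β * y)) atTop (nhds (1/β)) := by
    have base : Tendsto (fun y : ℕ => (α/β) * (1/(y:ℝ)) + 1/β) atTop (nhds (1/β)) := by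
      have h0 : Tendsto (fun y : ℕ => (1:ℝ)/(y:ℝ)) atTop (nhds 0) :=
        tendsto_one_div_atTop_nhds_zero_nat
      have := (h0.const_mul (α/β)).add_const (1/β)
      simpa using this
    apply base.congr'
    filter_upwards [eventually_ge_atTop 1] with y hy
    have hy0 : (0:ℝ) < (y:ℝ) := by exact_mod_cast hy
    field_simp
  have t2 : Tendsto (fun y : ℕ => (α + (y:ℝ)) / (β * y) * (J (y+1) / J y) - 1)
      atTop (nhds 0) := by
    have := (t1.mul hr).sub_const 1
    have h1 : 1/β * β - 1 = 0 := by field_simp; ring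
    rw [h1] at this
    exact this
  have t3 : Tendsto (fun y : ℕ => |(α + (y:ℝ)) / (β * y) * (J (y+1) / J y) - 1|)
      atTop (nhds 0) := by
    have := t2.abs
    simpa using this
  apply t3.congr'
  filter_upwards [eventually_ge_atTop 1] with y hy
  have hy0 : (0:ℝ) < (y:ℝ) := by exact_mod_cast hy
  have hJy := (hJpos y).ne'
  have hJy1 := (hJpos (y+1)).ne'
  have e3 : (α + (y:ℝ)) / (β * y) * (J (y+1) / J y) - 1 = (lt y - y) / y := by
    rw [show lt y = ((α + y) / β * J (y+1)) / J y from hlt2 y]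
    have hJy' : J y ≠ 0 := hJy
    field_simp
  rw [e3, abs_div, abs_of_pos hy0]
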